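/- Let α be an infinite cardinal and I an ideal on an arc-connected topological space X, and let a ∈ X. Then the set {[f] : f is an α-I-loop based at a} of path-homotopy classes of α-I-loops is a subgroup of the fundamental group π₁(X, a), provided X has at least two points and there exists a continuous injective path from a to some other point. -/

import Mathlib

/-- `I` is an ideal on `X`. -/
def IsIdealOn {X : Type*} (I : Set (Set X)) : Prop :=
  I.Nonempty ∧ (∀ A ∈ I, ∀ B ∈ I, A ∪ B ∈ I) ∧ (∀ A ∈ I, ∀ B, B ⊆ A → B ∈ I)

/-- The homotopy class of a loop, as an element of the fundamental group. -/
noncomputable def loopClass {X : Type*} [TopologicalSpace X] {a : X} (f : Path a a) :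
    FundamentalGroup X a :=
  @FundamentalGroup.fromPath X _ a ⟦f⟧

attribute [local instance] Path.Homotopic.setoid

lemma loopClass_trans {X : Type*} [TopologicalSpace X] {a : X} (f g : Path a a) :
    loopClass (f.trans g) = loopClass g * loopClass f := by
  rfl

lemma loopClass_refl {X : Type*} [TopologicalSpace X] {a : X} :
    loopClass (Path.refl a) = 1 := by
  rfl

lemma loopClass_eq_one_of_homotopic {X : Type*} [TopologicalSpace X] {a : X} (f : Path a a)
    (h : Path.Homotopic f (Path.refl a)) : loopClass f = 1 := by
  rw [← loopClass_refl]
  exact Quotient.sound h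

lemma loopClass_symm {X : Type*} [TopologicalSpace X] {a : X} (f : Path a a) :
    loopClass (f.symm) = (loopClass f)⁻¹ := by
  rw [eq_inv_iff_mul_eq_one, ← loopClass_trans]
  exact loopClass_eq_one_of_homotopic _ ⟨(Path.Homotopy.reflTransSymm f).symm⟩

open unitInterval in
lemma mk_trans_preimage_le {X : Type*} [TopologicalSpace X] {a b c : X} (f : Path a b)
    (g : Path b c) (x : X) :
    Cardinal.mk ((⇑(f.trans g)) ⁻¹' {x}) ≤
      Cardinal.mk ((⇑f) ⁻¹' {x}) + Cardinal.mk ((⇑g) ⁻¹' {x}) := by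
  have := Cardinal.mk_sum ((⇑f) ⁻¹' {x} : Set I) ((⇑g) ⁻¹' {x} : Set I)
  simp only [Cardinal.lift_id] at this
  rw [← this]
  refine Cardinal.mk_le_of_injective (f := fun t =>
    if h : (t.1 : ℝ) ≤ 1/2 then
      Sum.inl ⟨⟨2 * t.1, (unitInterval.mul_pos_mem_iff two_pos).2 ⟨t.1.2.1, h⟩⟩, by
        have := t.2
        rwa [Set.mem_preimage, Path.trans_apply, dif_pos h] at this⟩
    else
      Sum.inr ⟨⟨2 * t.1 - 1, unitInterval.two_mul_sub_one_mem_iff.2 ⟨(not_le.1 h).le, t.1.2.2⟩⟩, by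
        have := t.2
        rwa [Set.mem_preimage, Path.trans_apply, dif_neg h] at this⟩) ?_
  rintro ⟨s, hs⟩ ⟨t, ht⟩ h
  dsimp only at h
  by_cases h1 : (s : ℝ) ≤ 1/2 <;> by_cases h2 : (t : ℝ) ≤ 1/2
  · rw [dif_pos h1, dif_pos h2] at h
    simp only [Sum.inl.injEq, Subtype.mk.injEq] at h
    ext; linarith
  · rw [dif_pos h1, dif_neg h2] at h
    exact absurd h (by simp)
  · rw [dif_neg h1, dif_pos h2] at h
    exact absurd h (by simp)
  · rw [dif_neg h1, dif_neg h2] at h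
    simp only [Sum.inr.injEq, Subtype.mk.injEq] at h
    ext; linarith

lemma mk_symm_preimage_le {X : Type*} [TopologicalSpace X] {a b : X} (f : Path a b) (x : X) :
    Cardinal.mk ((⇑(f.symm)) ⁻¹' {x}) ≤ Cardinal.mk ((⇑f) ⁻¹' {x}) := by
  have hinj : Function.Injective (unitInterval.symm) :=
    Function.Involutive.injective unitInterval.symm_symm
  have : (⇑(f.symm)) ⁻¹' {x} = unitInterval.symm ⁻¹' ((⇑f) ⁻¹' {x}) := rfl
  rw [this]
  exact Cardinal.mk_preimage_of_injective _ _ hinj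

/-- For an infinite cardinal `α` and an ideal `I` on an arc-connected space `X` with at least
two points, the set of homotopy classes of α-I-loops based at `a` is a subgroup of `π₁(X, a)`. -/
theorem stmt2 {X : Type*} [TopologicalSpace X] (α : Cardinal) (hα : Cardinal.aleph0 ≤ α)
    (I : Set (Set X)) (hI : IsIdealOn I) (a : X)
    (harc : ∀ p q : X, p ≠ q → ∃ γ : Path p q, Function.Injective γ)
    (htwo : ∃ b : X, b ≠ a) :
    ∃ S : Subgroup (FundamentalGroup X a),
      (S : Set (FundamentalGroup X a)) =
        {p | ∃ f : Path a a,
          (∃ A ∈ I, ∀ x ∉ A, Cardinal.mk ((⇑f) ⁻¹' {x}) < α) ∧ loopClass f = p} := by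
  obtain ⟨A0, hA0⟩ := hI.1
  have hempty : (∅ : Set X) ∈ I := hI.2.2 A0 hA0 ∅ (Set.empty_subset _)
  obtain ⟨b, hb⟩ := htwo
  obtain ⟨γ, hγ⟩ := harc a b (Ne.symm hb)
  refine ⟨⟨⟨⟨{p | ∃ f : Path a a,
          (∃ A ∈ I, ∀ x ∉ A, Cardinal.mk ((⇑f) ⁻¹' {x}) < α) ∧ loopClass f = p}, ?_⟩, ?_⟩,
            ?_⟩, rfl⟩
  case refine_1 => -- mul
    rintro p q ⟨f, ⟨Af, hAf, hf⟩, rfl⟩ ⟨g, ⟨Ag, hAg, hg⟩, rfl⟩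
    refine ⟨g.trans f, ⟨Af ∪ Ag, hI.2.1 Af hAf Ag hAg, fun x hx => ?_⟩, ?_⟩
    · have hx1 : x ∉ Af := fun h => hx (Set.mem_union_left _ h)
      have hx2 : x ∉ Ag := fun h => hx (Set.mem_union_right _ h)
      exact lt_of_le_of_lt (mk_trans_preimage_le g f x)
        (Cardinal.add_lt_of_lt hα (hg x hx2) (hf x hx1))
    · exact loopClass_trans g f
  case refine_3 => -- inv
    rintro p ⟨f, ⟨A, hA, hf⟩, rfl⟩
    exact ⟨f.symm, ⟨A, hA, fun x hx =>
      lt_of_le_of_lt (mk_symm_preimage_le f x) (hf x hx)⟩, loopClass_symm f⟩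
  · -- identity: γ.trans γ.symm
    refine ⟨γ.trans γ.symm, ⟨∅, hempty, fun x _ => ?_⟩, ?_⟩
    · calc Cardinal.mk ((⇑(γ.trans γ.symm)) ⁻¹' {x})
          ≤ Cardinal.mk ((⇑γ) ⁻¹' {x}) + Cardinal.mk ((⇑γ.symm) ⁻¹' {x}) :=
            mk_trans_preimage_le γ γ.symm x
        _ ≤ 1 + 1 := by
            refine add_le_add ?_ (le_trans (mk_symm_preimage_le γ x) ?_) <;>
            · rw [Cardinal.mk_le_one_iff_set_subsingleton]
              intro s hs t ht
              exact hγ (hs.trans ht.symm)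
        _ < Cardinal.aleph0 := by
            norm_num
        _ ≤ α := hα
    · exact loopClass_eq_one_of_homotopic _ ⟨(Path.Homotopy.reflTransSymm γ).symm⟩
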